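/- Let ℍ̄ = ℂ[W] ⋉ S(V^∨) be the associated graded algebra of ℍ and d̄ the induced odd-derivation operator on ℍ̄ ⊗ C(V^∨), given on a simple tensor a = t_w f ⊗ v₁⋯v_k by d̄(a) = Σᵢ ωᵢ t_w f ⊗ ωᵢ v₁⋯v_k − (−1)^k Σᵢ t_w f ωᵢ ⊗ v₁⋯v_k ωᵢ for a self-dual basis {ωᵢ}. Then d̄² = 0. -/

import Mathlib

open scoped TensorProduct

/-- On ℍ̄ ⊗ C(V^∨), where ℍ̄ = ℂ[W] ⋉ S(V^∨) is the associated
graded algebra of ℍ, the induced odd-derivation operator d̄, given on simple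
tensors a ⊗ v₁⋯v_k by
d̄(a ⊗ v₁⋯v_k) = Σᵢ ωᵢ a ⊗ ωᵢ v₁⋯v_k − (−1)^k Σᵢ a ωᵢ ⊗ v₁⋯v_k ωᵢ
for a self-dual basis {ωᵢ}, satisfies d̄² = 0. -/

lemma clifford_listspan {R M : Type*} [CommRing R] [AddCommGroup M] [Module R M]
    (Q : QuadraticForm R M) (c : CliffordAlgebra Q) :
    c ∈ Submodule.span R {u : CliffordAlgebra Q |
        ∃ L : List M, u = (L.map (CliffordAlgebra.ι Q)).prod} := by
  set S := Submodule.span R {u : CliffordAlgebra Q |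
      ∃ L : List M, u = (L.map (CliffordAlgebra.ι Q)).prod} with hS
  induction c using CliffordAlgebra.induction with
  | algebraMap r =>
    have h1 : (1 : CliffordAlgebra Q) ∈ S :=
      Submodule.subset_span ⟨[], by simp⟩
    simpa [Algebra.algebraMap_eq_smul_one] using S.smul_mem r h1
  | ι v => exact Submodule.subset_span ⟨[v], by simp⟩
  | mul a b ha hb =>
    induction ha using Submodule.span_induction with
    | mem u hu =>
      induction hb using Submodule.span_induction with
      | mem v hv =>
        obtain ⟨L₁, rfl⟩ := hu
        obtain ⟨L₂, rfl⟩ := hv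
        exact Submodule.subset_span ⟨L₁ ++ L₂, by simp⟩
      | zero => simpa using S.zero_mem
      | add y z _ _ hy hz => simpa [mul_add] using S.add_mem hy hz
      | smul r y _ hy => simpa [mul_smul_comm] using S.smul_mem r hy
    | zero => simpa using S.zero_mem
    | add y z _ _ hy hz => simpa [add_mul] using S.add_mem hy hz
    | smul r y _ hy => simpa [smul_mul_assoc] using S.smul_mem r hy
  | add a b ha hb => exact S.add_mem ha hb

theorem stmt_17
    {V V' : Type} [AddCommGroup V] [Module ℂ V] [DecidableEq V]
    [AddCommGroup V'] [Module ℂ V']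
    (P : V →ₗ[ℂ] V' →ₗ[ℂ] ℂ)
    {W : Type} [Group W]
    (σ : W →* (V ≃ₗ[ℂ] V)) (σ' : W →* (V' ≃ₗ[ℂ] V'))
    (R : Finset V) (s : V → W) (cor : V → V')
    {Hb : Type} [Ring Hb] [Algebra ℂ Hb]
    (t : W → Hb) (x : V' →ₗ[ℂ] Hb)
    (ht1 : t 1 = 1) (htm : ∀ w₁ w₂ : W, t (w₁ * w₂) = t w₁ * t w₂)
    (hxc : ∀ ω₁ ω₂ : V', x ω₁ * x ω₂ = x ω₂ * x ω₁)
    (hcross : ∀ (w : W) (ω : V'), t w * x ω = x (σ' w ω) * t w)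
    (hspan : ∀ a : Hb, a ∈ Submodule.span ℂ
        {u : Hb | ∃ (w : W) (L : List V'), u = t w * (L.map x).prod})
    (hs2 : ∀ α ∈ R, s α * s α = 1)
    (hsV' : ∀ α ∈ R, ∀ ω : V', σ' (s α) ω = ω - P α ω • cor α)
    (B : V' →ₗ[ℂ] V' →ₗ[ℂ] ℂ) (hBsym : ∀ u v : V', B u v = B v u)
    (hBW : ∀ (w : W) (u v : V'), B (σ' w u) (σ' w v) = B u v)
    (hcorP : ∀ α ∈ R, ∀ ω : V', P α ω * B (cor α) (cor α) = 2 * B (cor α) ω)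
    {n : ℕ} (b : Module.Basis (Fin n) ℂ V')
    (hdual : ∀ i j, B (b i) (b j) = if i = j then 1 else 0)
    (QC : QuadraticForm ℂ V') (hQC : ∀ v : V', QC v = - B v v)
    (d : (Hb ⊗[ℂ] CliffordAlgebra QC) →ₗ[ℂ] (Hb ⊗[ℂ] CliffordAlgebra QC))
    (hd : ∀ (a : Hb) (L : List V'),
      d (a ⊗ₜ[ℂ] (L.map (CliffordAlgebra.ι QC)).prod)
        = ∑ i, (x (b i) * a) ⊗ₜ[ℂ]
            (CliffordAlgebra.ι QC (b i) * (L.map (CliffordAlgebra.ι QC)).prod)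
          - ((-1 : ℂ)^L.length) • ∑ i, (a * x (b i)) ⊗ₜ[ℂ]
            ((L.map (CliffordAlgebra.ι QC)).prod * CliffordAlgebra.ι QC (b i))) :
    d ∘ₗ d = 0 := by
  classical
  set ι := CliffordAlgebra.ι QC with hι
  have hrepr : ∀ v : V', (∀ j, B v (b j) = b.repr v j) := by
    intro v j
    conv_lhs => rw [← b.sum_repr v]
    simp [-Module.Basis.sum_repr, hdual, Finset.sum_ite_eq', mul_comm]
  have hrep : ∀ v : V', v = ∑ j, B v (b j) • b j := by
    intro v; simp only [hrepr]; exact (b.sum_repr v).symm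
  have hBexp : ∀ u v : V', B u v = ∑ j, B u (b j) * B v (b j) := by
    intro u v
    conv_lhs => rw [hrep v]
    simp [mul_comm]
  set Ω : Hb := ∑ i, x (b i) * x (b i) with hΩ
  -- Ω commutes with x ω
  have hΩx : ∀ ω : V', Ω * x ω = x ω * Ω := by
    intro ω
    rw [hΩ, Finset.sum_mul, Finset.mul_sum]
    refine Finset.sum_congr rfl fun i _ => ?_
    rw [mul_assoc, hxc _ ω, ← mul_assoc, hxc _ ω, mul_assoc]
  -- invariance of Ω under basis change by σ' w
  have hΩinv : ∀ w : W, (∑ i, x (σ' w (b i)) * x (σ' w (b i))) = Ω := by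
    intro w
    set M : Matrix (Fin n) (Fin n) ℂ := fun i j => B (σ' w (b i)) (b j) with hM
    have hMMT : M * M.transpose = 1 := by
      ext i i'
      simp only [Matrix.mul_apply, Matrix.transpose_apply, Matrix.one_apply]
      simp only [hM]
      rw [← hBexp, hBW, hdual]
    have hMTM : M.transpose * M = 1 := mul_eq_one_comm.mp hMMT
    have hcol : ∀ j k : Fin n, (∑ i, M i j * M i k) = if j = k then 1 else 0 := by
      intro j k
      have := congrFun (congrFun hMTM j) k
      simpa [Matrix.mul_apply, Matrix.transpose_apply, Matrix.one_apply] using this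
    have hx' : ∀ i, x (σ' w (b i)) = ∑ j, M i j • x (b j) := by
      intro i
      conv_lhs => rw [hrep (σ' w (b i))]
      simp [hM]
    calc (∑ i, x (σ' w (b i)) * x (σ' w (b i)))
        = ∑ i, ∑ j, ∑ k, (M i j * M i k) • (x (b j) * x (b k)) := by
          refine Finset.sum_congr rfl fun i _ => ?_
          rw [hx', Finset.sum_mul]
          refine Finset.sum_congr rfl fun j _ => ?_
          rw [Finset.mul_sum]
          refine Finset.sum_congr rfl fun k _ => ?_
          rw [smul_mul_assoc, mul_smul_comm, smul_smul]
      _ = ∑ j, ∑ k, (∑ i, M i j * M i k) • (x (b j) * x (b k)) := by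
          rw [Finset.sum_comm]
          refine Finset.sum_congr rfl fun j _ => ?_
          rw [Finset.sum_comm]
          refine Finset.sum_congr rfl fun k _ => ?_
          rw [Finset.sum_smul]
      _ = Ω := by
          simp only [hcol, ite_smul, one_smul, zero_smul]
          simp [Finset.sum_ite_eq, hΩ]
  -- Ω commutes with t w
  have hΩt : ∀ w : W, Ω * t w = t w * Ω := by
    intro w
    rw [hΩ, Finset.mul_sum]
    have : ∀ i : Fin n, t w * (x (b i) * x (b i))
        = (x (σ' w (b i)) * x (σ' w (b i))) * t w := by
      intro i
      rw [← mul_assoc, hcross, mul_assoc, hcross, ← mul_assoc]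
    rw [Finset.sum_congr rfl fun i _ => this i, ← Finset.sum_mul, hΩinv]
  -- Ω is central
  have hΩc : ∀ a : Hb, Ω * a = a * Ω := by
    intro a
    induction hspan a using Submodule.span_induction with
    | mem u hu =>
      obtain ⟨w, L, rfl⟩ := hu
      have hL : Ω * (L.map x).prod = (L.map x).prod * Ω := by
        induction L with
        | nil => simp
        | cons v L ih =>
          simp only [List.map_cons, List.prod_cons]
          rw [← mul_assoc, hΩx, mul_assoc, ih, mul_assoc]
      rw [← mul_assoc, hΩt, mul_assoc, hL, ← mul_assoc]
    | zero => simp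
    | add y z _ _ hy hz => rw [mul_add, add_mul, hy, hz]
    | smul r y _ hy => rw [mul_smul_comm, smul_mul_assoc, hy]
  -- polar form computation
  have hpolar : ∀ u v : V', QuadraticMap.polar QC u v = -2 * B u v := by
    intro u v
    simp only [QuadraticMap.polar, hQC, map_add, LinearMap.add_apply]
    rw [hBsym v u]; ring
  have hanti : ∀ i j : Fin n, ι (b i) * ι (b j) + ι (b j) * ι (b i)
      = algebraMap ℂ (CliffordAlgebra QC) (if i = j then (-2 : ℂ) else 0) := by
    intro i j
    rw [hι, CliffordAlgebra.ι_mul_ι_add_swap, hpolar, hdual]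
    congr 1
    by_cases h : i = j <;> simp [h]
  have hhalf : ∀ (u v : Hb ⊗[ℂ] CliffordAlgebra QC),
      (2:ℂ) • u = (2:ℂ) • v → u = v := by
    intro u v h
    have := congrArg (fun z => ((2:ℂ)⁻¹) • z) h
    simpa [smul_smul] using this
  -- symmetrization lemma, left version
  have key1 : ∀ (c : Hb) (PL : CliffordAlgebra QC),
      (∑ i, ∑ j, (x (b j) * (x (b i) * c)) ⊗ₜ[ℂ] (ι (b j) * (ι (b i) * PL)))
        = - ∑ i, ((x (b i) * (x (b i) * c)) ⊗ₜ[ℂ] PL) := by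
    intro c PL
    have hswap : (∑ i, ∑ j, (x (b j) * (x (b i) * c)) ⊗ₜ[ℂ] (ι (b j) * (ι (b i) * PL)))
        = ∑ i, ∑ j, (x (b j) * (x (b i) * c)) ⊗ₜ[ℂ] (ι (b i) * (ι (b j) * PL)) := by
      rw [Finset.sum_comm]
      refine Finset.sum_congr rfl fun i _ => Finset.sum_congr rfl fun j _ => ?_
      rw [← mul_assoc, hxc, mul_assoc]
    apply hhalf
    rw [two_smul]
    nth_rewrite 2 [hswap]
    rw [← Finset.sum_add_distrib]
    calc (∑ i, ((∑ j, (x (b j) * (x (b i) * c)) ⊗ₜ[ℂ] (ι (b j) * (ι (b i) * PL)))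
            + ∑ j, (x (b j) * (x (b i) * c)) ⊗ₜ[ℂ] (ι (b i) * (ι (b j) * PL))))
        = ∑ i, ∑ j, (if j = i then (-2:ℂ) else 0) • ((x (b j) * (x (b i) * c)) ⊗ₜ[ℂ] PL) := by
          refine Finset.sum_congr rfl fun i _ => ?_
          rw [← Finset.sum_add_distrib]
          refine Finset.sum_congr rfl fun j _ => ?_
          rw [← TensorProduct.tmul_add]
          simp only [← mul_assoc]
          rw [← add_mul, hanti j i, ← Algebra.smul_def, TensorProduct.tmul_smul]
      _ = ∑ i, (-2:ℂ) • ((x (b i) * (x (b i) * c)) ⊗ₜ[ℂ] PL) := by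
          simp [ite_smul, zero_smul, Finset.sum_ite_eq]
      _ = (2:ℂ) • -∑ i, ((x (b i) * (x (b i) * c)) ⊗ₜ[ℂ] PL) := by
          rw [smul_neg, ← Finset.smul_sum, ← neg_smul, Finset.smul_sum]
  -- symmetrization lemma, right version
  have key2 : ∀ (c : Hb) (PL : CliffordAlgebra QC),
      (∑ i, ∑ j, ((c * x (b i)) * x (b j)) ⊗ₜ[ℂ] ((PL * ι (b i)) * ι (b j)))
        = - ∑ i, ((c * x (b i) * x (b i)) ⊗ₜ[ℂ] PL) := by
    intro c PL
    have hswap : (∑ i, ∑ j, ((c * x (b i)) * x (b j)) ⊗ₜ[ℂ] ((PL * ι (b i)) * ι (b j)))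
        = ∑ i, ∑ j, ((c * x (b i)) * x (b j)) ⊗ₜ[ℂ] ((PL * ι (b j)) * ι (b i)) := by
      rw [Finset.sum_comm]
      refine Finset.sum_congr rfl fun i _ => Finset.sum_congr rfl fun j _ => ?_
      rw [mul_assoc, hxc, ← mul_assoc]
    apply hhalf
    rw [two_smul]
    nth_rewrite 2 [hswap]
    rw [← Finset.sum_add_distrib]
    calc (∑ i, ((∑ j, ((c * x (b i)) * x (b j)) ⊗ₜ[ℂ] ((PL * ι (b i)) * ι (b j)))
            + ∑ j, ((c * x (b i)) * x (b j)) ⊗ₜ[ℂ] ((PL * ι (b j)) * ι (b i))))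
        = ∑ i, ∑ j, (if i = j then (-2:ℂ) else 0) • (((c * x (b i)) * x (b j)) ⊗ₜ[ℂ] PL) := by
          refine Finset.sum_congr rfl fun i _ => ?_
          rw [← Finset.sum_add_distrib]
          refine Finset.sum_congr rfl fun j _ => ?_
          rw [← TensorProduct.tmul_add, mul_assoc PL, mul_assoc PL, ← mul_add, hanti i j,
            ← Algebra.commutes, ← Algebra.smul_def, TensorProduct.tmul_smul]
      _ = ∑ i, (-2:ℂ) • (((c * x (b i)) * x (b i)) ⊗ₜ[ℂ] PL) := by
          simp [ite_smul, zero_smul, Finset.sum_ite_eq]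
      _ = (2:ℂ) • -∑ i, ((c * x (b i) * x (b i)) ⊗ₜ[ℂ] PL) := by
          rw [smul_neg, ← Finset.smul_sum, ← neg_smul, Finset.smul_sum]
  have hc : ((-1:ℂ))^(1:ℕ) = -1 := pow_one _
  -- main computation on generators
  have main : ∀ (a : Hb) (L : List V'),
      d (d (a ⊗ₜ[ℂ] (L.map ι).prod)) = 0 := by
    intro a L
    have e1 : ∀ i : Fin n,
        d ((x (b i) * a) ⊗ₜ[ℂ] (ι (b i) * (L.map ι).prod))
          = ∑ j, (x (b j) * (x (b i) * a)) ⊗ₜ[ℂ] (ι (b j) * (ι (b i) * (L.map ι).prod))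
            - ((-1:ℂ)^(L.length+1)) • ∑ j, ((x (b i) * a) * x (b j)) ⊗ₜ[ℂ]
                ((ι (b i) * (L.map ι).prod) * ι (b j)) := by
      intro i
      have h := hd (x (b i) * a) (b i :: L)
      simpa using h
    have e2 : ∀ i : Fin n,
        d ((a * x (b i)) ⊗ₜ[ℂ] ((L.map ι).prod * ι (b i)))
          = ∑ j, (x (b j) * (a * x (b i))) ⊗ₜ[ℂ] (ι (b j) * ((L.map ι).prod * ι (b i)))
            - ((-1:ℂ)^(L.length+1)) • ∑ j, ((a * x (b i)) * x (b j)) ⊗ₜ[ℂ]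
                (((L.map ι).prod * ι (b i)) * ι (b j)) := by
      intro i
      have h := hd (a * x (b i)) (L ++ [b i])
      simpa [List.prod_append] using h
    rw [hd a L, map_sub, map_smul, map_sum, map_sum,
      Finset.sum_congr rfl fun i _ => e1 i, Finset.sum_congr rfl fun i _ => e2 i,
      Finset.sum_sub_distrib, Finset.sum_sub_distrib, ← Finset.smul_sum, ← Finset.smul_sum]
    have hT3 : (∑ i, ∑ j, (x (b j) * (a * x (b i))) ⊗ₜ[ℂ]
          (ι (b j) * ((L.map ι).prod * ι (b i))))
        = ∑ i, ∑ j, ((x (b i) * a) * x (b j)) ⊗ₜ[ℂ]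
          ((ι (b i) * (L.map ι).prod) * ι (b j)) := by
      rw [Finset.sum_comm]
      refine Finset.sum_congr rfl fun i _ => Finset.sum_congr rfl fun j _ => ?_
      simp [mul_assoc]
    rw [hT3, key1 a, key2 a]
    have hS : (∑ i, ((a * x (b i) * x (b i)) ⊗ₜ[ℂ] (L.map ι).prod))
        - (∑ i, ((x (b i) * (x (b i) * a)) ⊗ₜ[ℂ] (L.map ι).prod)) = 0 := by
      rw [← Finset.sum_sub_distrib]
      have : ∀ i : Fin n, (a * x (b i) * x (b i)) ⊗ₜ[ℂ] (L.map ι).prod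
          - (x (b i) * (x (b i) * a)) ⊗ₜ[ℂ] (L.map ι).prod
          = (a * x (b i) * x (b i) - x (b i) * (x (b i) * a)) ⊗ₜ[ℂ] (L.map ι).prod := by
        intro i; rw [TensorProduct.sub_tmul]
      rw [Finset.sum_congr rfl fun i _ => this i, ← TensorProduct.sum_tmul]
      have hz : (∑ i, (a * x (b i) * x (b i) - x (b i) * (x (b i) * a))) = 0 := by
        rw [Finset.sum_sub_distrib]
        have ea : (∑ i, a * x (b i) * x (b i)) = a * Ω := by
          rw [hΩ, Finset.mul_sum]
          exact Finset.sum_congr rfl fun i _ => by rw [mul_assoc]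
        have eb : (∑ i, x (b i) * (x (b i) * a)) = Ω * a := by
          rw [hΩ, Finset.sum_mul]
          exact Finset.sum_congr rfl fun i _ => by rw [mul_assoc]
        rw [ea, eb, hΩc a, sub_self]
      rw [hz, TensorProduct.zero_tmul]
    rw [pow_succ]
    set S1 := ∑ i, ((x (b i) * (x (b i) * a)) ⊗ₜ[ℂ] (L.map ι).prod) with hS1
    set S2 := ∑ i, ((a * x (b i) * x (b i)) ⊗ₜ[ℂ] (L.map ι).prod) with hS2
    set T2 := ∑ i, ∑ j, ((x (b i) * a) * x (b j)) ⊗ₜ[ℂ]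
        ((ι (b i) * (L.map ι).prod) * ι (b j)) with hT2
    set c0 := ((-1:ℂ))^L.length with hc0
    have hcc : c0 * c0 = 1 := by
      rw [hc0, ← pow_add]
      exact Even.neg_one_pow ⟨L.length, rfl⟩
    have : (-S1 - (c0 * -1) • T2) - c0 • (T2 - (c0 * -1) • -S2) = S2 - S1 := by
      rw [smul_sub, smul_smul]
      rw [show c0 * (c0 * -1) = -1 by rw [← mul_assoc, hcc]; ring]
      simp only [mul_neg_one, neg_smul, one_smul, neg_neg, smul_neg]
      abel
    rw [this, hS]
  -- assemble
  apply LinearMap.ext; intro z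
  simp only [LinearMap.comp_apply, LinearMap.zero_apply]
  induction z using TensorProduct.induction_on with
  | zero => simp
  | tmul a c =>
    refine Submodule.span_induction ?_ ?_ ?_ ?_ (clifford_listspan QC c)
    · rintro u ⟨L, rfl⟩
      exact main a L
    · simp
    · intro y z _ _ hy hz
      rw [TensorProduct.tmul_add, map_add, map_add, hy, hz, add_zero]
    · intro r y _ hy
      rw [TensorProduct.tmul_smul, map_smul, map_smul, hy, smul_zero]
  | add u v hu hv => rw [map_add, map_add, hu, hv, add_zero]
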